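/- In OP_{2i}(mi, m), the two cycles (1,m-1,1,m-1,...,1,m-1) and (m-1,1,m-1,1,...,m-1,1) (each with 2i entries) are homologous: their difference is the boundary of c = Σ_{j=1}^{i} (1,m-1,...,1,m-2,1,...,m-1,1) ∈ OP_{2i+1}(mi,m), where in the j-th summand the entry m-2 appears in position 2j. -/

import Mathlib

open scoped Classical

/-- Basis of `OP_k(ℓ,m)`: ordered partitions of `ℓ` into `k` parts, all in `{1,...,m-1}`. -/
def OPb (ℓ : ℤ) (m k : ℕ) : Type :=
  {l : List ℕ // l.length = k ∧ (l.sum : ℤ) = ℓ ∧ ∀ x ∈ l, 1 ≤ x ∧ x < m}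

/-- The degree-`k` chain module of the complex of ordered partitions with upper bound. -/
abbrev OPMod (R : Type) [CommRing R] (ℓ : ℤ) (m k : ℕ) := OPb ℓ m k →₀ R

/-- The alternating sum of adjacent merges of a list, dropping merged entries `≥ m`. -/
noncomputable def dList (R : Type) [CommRing R] (m : ℕ) : List ℕ → (List ℕ →₀ R)
  | [] => 0
  | [_] => 0
  | a :: b :: t =>
      (if a + b < m then -Finsupp.single ((a + b) :: t) (1 : R) else 0)
        - Finsupp.mapDomain (List.cons a) (dList R m (b :: t))

/-- Embedding of `OP_k(ℓ,m)` into the free module on all lists. -/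
noncomputable def eL (R : Type) [CommRing R] (ℓ : ℤ) (m k : ℕ) :
    OPMod R ℓ m k →ₗ[R] (List ℕ →₀ R) :=
  Finsupp.lmapDomain R R Subtype.val

noncomputable def DL (R : Type) [CommRing R] (m : ℕ) : (List ℕ →₀ R) →ₗ[R] (List ℕ →₀ R) :=
  Finsupp.lsum R fun l => LinearMap.toSpanSingleton R _ (dList R m l)

noncomputable def rL (R : Type) [CommRing R] (ℓ : ℤ) (m k : ℕ) :
    (List ℕ →₀ R) →ₗ[R] OPMod R ℓ m k :=
  Finsupp.lcomapDomain Subtype.val Subtype.val_injective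

/-- The differential of the complex `OP_*(ℓ,m)`: merge adjacent entries with alternating
signs `(-1)^i`, dropping any term in which the merged entry is `≥ m`. -/
noncomputable def dOP (R : Type) [CommRing R] (ℓ : ℤ) (m k : ℕ) :
    OPMod R ℓ m (k + 1) →ₗ[R] OPMod R ℓ m k :=
  (rL R ℓ m k) ∘ₗ (DL R m) ∘ₗ (eL R ℓ m (k + 1))

/-- The outgoing differential from degree `k` (zero in degree `0`). -/
noncomputable def dOPOut (R : Type) [CommRing R] (ℓ : ℤ) (m : ℕ) :
    (k : ℕ) → OPMod R ℓ m k →ₗ[R] OPMod R ℓ m (k - 1)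
  | 0 => 0
  | (k + 1) => dOP R ℓ m k

/-- Homology of the complex `OP_*(ℓ,m)` in degree `k`. -/
noncomputable abbrev OPH (R : Type) [CommRing R] (ℓ : ℤ) (m k : ℕ) :=
  letI : HasQuotient (LinearMap.ker (dOPOut R ℓ m k))
      (Submodule R (LinearMap.ker (dOPOut R ℓ m k))) :=
      Submodule.hasQuotient (R := R) (M := LinearMap.ker (dOPOut R ℓ m k))
  LinearMap.ker (dOPOut R ℓ m k) ⧸
    (LinearMap.range (dOPOut R ℓ m (k + 1))).comap (LinearMap.ker (dOPOut R ℓ m k)).subtype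

/-- The chain map `φ : OP_{*-2}(ℓ-m,m) → OP_*(ℓ,m)`, prepending `(1, m-1)`. -/
noncomputable def phiOP (R : Type) [CommRing R] (ℓ : ℤ) (m : ℕ) (hm : 2 ≤ m) (k : ℕ) :
    OPMod R (ℓ - m) m k →ₗ[R] OPMod R ℓ m (k + 2) :=
  Finsupp.lmapDomain R R fun b =>
    ⟨1 :: (m - 1) :: b.1, by
      obtain ⟨h1, h2, h3⟩ := b.2
      refine ⟨by simpa using h1, ?_, ?_⟩
      · simp only [List.sum_cons]
        omega
      · intro y hy
        simp only [List.mem_cons] at hy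
        rcases hy with rfl | rfl | hy
        · omega
        · omega
        · exact h3 y hy⟩

/-- The alternating list `(1, m-1, 1, m-1, ...)` with `2i` entries. -/
def altL (m : ℕ) : ℕ → List ℕ
  | 0 => []
  | i + 1 => 1 :: (m - 1) :: altL m i

/-- The alternating list `(m-1, 1, m-1, 1, ...)` with `2i` entries. -/
def altL' (m : ℕ) : ℕ → List ℕ
  | 0 => []
  | i + 1 => (m - 1) :: 1 :: altL' m i
section AuxLemmas

lemma altL_length (m k : ℕ) : (altL m k).length = 2 * k := by
  induction k with
  | zero => rfl
  | succ k ih => simp only [altL, List.length_cons, ih]; omega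

lemma altL'_length (m k : ℕ) : (altL' m k).length = 2 * k := by
  induction k with
  | zero => rfl
  | succ k ih => simp only [altL', List.length_cons, ih]; omega

lemma altL_sum (m k : ℕ) (hm : 1 ≤ m) : (altL m k).sum = k * m := by
  induction k with
  | zero => simp [altL]
  | succ k ih =>
    rw [altL, List.sum_cons, List.sum_cons, ih, Nat.succ_mul]
    generalize k * m = t
    omega

lemma altL'_sum (m k : ℕ) (hm : 1 ≤ m) : (altL' m k).sum = k * m := by
  induction k with
  | zero => simp [altL']
  | succ k ih =>
    rw [altL', List.sum_cons, List.sum_cons, ih, Nat.succ_mul]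
    generalize k * m = t
    omega

lemma altL_mem (m k x : ℕ) (hx : x ∈ altL m k) : x = 1 ∨ x = m - 1 := by
  induction k with
  | zero => simp [altL] at hx
  | succ k ih =>
    simp only [altL, List.mem_cons] at hx
    rcases hx with rfl | rfl | hx
    · exact Or.inl rfl
    · exact Or.inr rfl
    · exact ih hx

lemma altL'_mem (m k x : ℕ) (hx : x ∈ altL' m k) : x = 1 ∨ x = m - 1 := by
  induction k with
  | zero => simp [altL'] at hx
  | succ k ih =>
    simp only [altL', List.mem_cons] at hx
    rcases hx with rfl | rfl | hx
    · exact Or.inr rfl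
    · exact Or.inl rfl
    · exact ih hx

lemma altL_append_one (m k : ℕ) : altL m k ++ [1] = 1 :: altL' m k := by
  induction k with
  | zero => rfl
  | succ k ih => simp only [altL, altL', List.cons_append, ih]

lemma altL_succ (m j : ℕ) (s : List ℕ) :
    altL m (j + 1) ++ s = altL m j ++ (1 :: (m - 1) :: s) := by
  induction j with
  | zero => rfl
  | succ j ih =>
    show 1 :: (m - 1) :: (altL m (j + 1) ++ s) = 1 :: (m - 1) :: (altL m j ++ 1 :: (m - 1) :: s)
    rw [ih]

lemma dList_eq_zero (R : Type) [CommRing R] (m : ℕ) :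
    ∀ l : List ℕ, l.Chain' (fun a b => m ≤ a + b) → dList R m l = 0
  | [], _ => rfl
  | [_], _ => rfl
  | a :: b :: t, h => by
    unfold List.Chain' at h
    rw [List.isChain_cons_cons] at h
    rw [dList, if_neg (by omega), dList_eq_zero R m (b :: t) h.2]
    simp

lemma chain_one_altL' (m : ℕ) (hm : 1 ≤ m) (k : ℕ) :
    (1 :: altL' m k).Chain' (fun a b => m ≤ a + b) := by
  induction k with
  | zero => exact List.isChain_singleton _
  | succ k ih =>
    show (1 :: (m - 1) :: 1 :: altL' m k).Chain' _
    unfold List.Chain'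
    rw [List.isChain_cons_cons, List.isChain_cons_cons]
    exact ⟨by omega, by omega, ih⟩

lemma mapDomain_sub_single (R : Type) [CommRing R] (f : List ℕ → List ℕ) (a b : List ℕ) :
    Finsupp.mapDomain f (Finsupp.single a (1 : R) - Finsupp.single b 1) =
      Finsupp.single (f a) 1 - Finsupp.single (f b) 1 := by
  have h : ∀ v : List ℕ →₀ R, Finsupp.mapDomain f v = Finsupp.lmapDomain R R f v := fun _ => rfl
  rw [h, map_sub, ← h, ← h, Finsupp.mapDomain_single, Finsupp.mapDomain_single]

lemma dList_one_cons (R : Type) [CommRing R] (m : ℕ) (hm : 1 ≤ m) (x : ℕ) (hx : 1 ≤ x)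
    (t : List ℕ) :
    dList R m (1 :: (m - 1) :: x :: t) =
      Finsupp.mapDomain (fun l => 1 :: (m - 1) :: l) (dList R m (x :: t)) := by
  rw [dList, dList, if_neg (by omega), if_neg (by omega)]
  have h : ∀ (g : List ℕ → List ℕ) (v : List ℕ →₀ R),
      Finsupp.mapDomain g v = Finsupp.lmapDomain R R g v := fun _ _ => rfl
  rw [h, h, zero_sub, zero_sub, map_neg, neg_neg, ← h, ← h,
    ← Finsupp.mapDomain_comp]
  rfl

lemma dList_M (R : Type) [CommRing R] (m : ℕ) (hm : 3 ≤ m) (k : ℕ) :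
    dList R m (1 :: (m - 2) :: 1 :: altL' m k) =
      Finsupp.single (1 :: (m - 1) :: altL' m k) 1 -
        Finsupp.single ((m - 1) :: 1 :: altL' m k) 1 := by
  rw [dList, dList, if_pos (by omega), if_pos (by omega),
    dList_eq_zero R m _ (chain_one_altL' m (by omega) k)]
  have h1 : 1 + (m - 2) = m - 1 := by omega
  have h2 : m - 2 + 1 = m - 1 := by omega
  rw [h1, h2]
  have h : ∀ (g : List ℕ → List ℕ) (v : List ℕ →₀ R),
      Finsupp.mapDomain g v = Finsupp.lmapDomain R R g v := fun _ _ => rfl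
  rw [h, h, map_zero, sub_zero, map_neg, ← h, Finsupp.mapDomain_single]
  abel

lemma dList_L (R : Type) [CommRing R] (m : ℕ) (hm : 3 ≤ m) (k : ℕ) :
    ∀ j, dList R m (altL m j ++ (1 :: (m - 2) :: 1 :: altL' m k)) =
      Finsupp.single (altL m (j + 1) ++ altL' m k) 1 -
        Finsupp.single (altL m j ++ altL' m (k + 1)) 1
  | 0 => by
    simpa [altL, altL'] using dList_M R m hm k
  | (j + 1) => by
    obtain ⟨t, ht⟩ : ∃ t, altL m j ++ (1 :: (m - 2) :: 1 :: altL' m k) = 1 :: t := by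
      cases j with
      | zero => exact ⟨_, rfl⟩
      | succ n => exact ⟨_, rfl⟩
    show dList R m (1 :: (m - 1) :: (altL m j ++ (1 :: (m - 2) :: 1 :: altL' m k))) = _
    rw [ht, dList_one_cons R m (by omega) 1 le_rfl, ← ht, dList_L R m hm k j,
      mapDomain_sub_single]
    rfl

end AuxLemmas

/-- in `OP_{2i}(mi, m)` (`m ≥ 3`), the cycles `(1,m-1,...,1,m-1)` and
`(m-1,1,...,m-1,1)` are homologous: their difference is the boundary of
`c = Σ_{j=1}^{i} (1,m-1,...,1,m-2,1,...,m-1,1)`, where in the `j`-th summand the entry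
`m-2` appears in position `2j`. -/
theorem alt_cycles_homologous (R : Type) [CommRing R] (m i : ℕ) (hm : 3 ≤ m) :
    ∃ (c : OPMod R ((m : ℤ) * i) m (2 * i + 1))
      (b₁ b₂ : OPb ((m : ℤ) * i) m (2 * i)),
      b₁.1 = altL m i ∧ b₂.1 = altL' m i ∧
      eL R ((m : ℤ) * i) m (2 * i + 1) c =
        ∑ j ∈ Finset.range i,
          Finsupp.single (altL m j ++ [1, m - 2] ++ altL m (i - j - 1) ++ [1]) (1 : R) ∧
      dOP R ((m : ℤ) * i) m (2 * i) c = Finsupp.single b₁ 1 - Finsupp.single b₂ 1 := by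
  have hm1 : 1 ≤ m := by omega
  set Lst : ℕ → List ℕ := fun j => altL m j ++ [1, m - 2] ++ altL m (i - j - 1) ++ [1] with hLst
  have hB : ∀ j : ℕ, j < i → ((Lst j).length = 2 * i + 1 ∧ ((Lst j).sum : ℤ) = (m : ℤ) * i ∧
      ∀ x ∈ Lst j, 1 ≤ x ∧ x < m) := by
    intro j hj
    obtain ⟨a, rfl⟩ : ∃ a, i = j + 1 + a := ⟨i - j - 1, by omega⟩
    obtain ⟨m', rfl⟩ : ∃ m', m = m' + 3 := ⟨m - 3, by omega⟩
    refine ⟨?_, ?_, ?_⟩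
    · simp only [hLst, List.length_append, altL_length, List.length_cons, List.length_nil]
      omega
    · have hs : (Lst j).sum = (m' + 3) * (j + 1 + a) := by
        simp only [hLst, List.sum_append, altL_sum _ _ hm1,
          show j + 1 + a - j - 1 = a from by omega, List.sum_cons, List.sum_nil,
          show m' + 3 - 2 = m' + 1 from rfl]
        ring
      rw [hs]; push_cast; ring
    · intro x hx
      simp only [hLst, List.mem_append, List.mem_cons, List.not_mem_nil, or_false] at hx
      have : x = 1 ∨ x = m' + 3 - 1 ∨ x = m' + 3 - 2 := by
        rcases hx with ((hx | hx) | hx) | hx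
        · rcases altL_mem _ _ _ hx with rfl | rfl
          · exact Or.inl rfl
          · exact Or.inr (Or.inl rfl)
        · rcases hx with rfl | rfl
          · exact Or.inl rfl
          · exact Or.inr (Or.inr rfl)
        · rcases altL_mem _ _ _ hx with rfl | rfl
          · exact Or.inl rfl
          · exact Or.inr (Or.inl rfl)
        · exact Or.inl hx
      omega
  let B : {j // j ∈ Finset.range i} → OPb ((m : ℤ) * i) m (2 * i + 1) :=
    fun j => ⟨Lst j.1, hB j.1 (Finset.mem_range.mp j.2)⟩
  have heL : eL R ((m : ℤ) * i) m (2 * i + 1)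
      (∑ j ∈ (Finset.range i).attach, Finsupp.single (B j) (1 : R))
      = ∑ j ∈ Finset.range i, Finsupp.single (Lst j) (1 : R) := by
    rw [map_sum, ← Finset.sum_attach (Finset.range i) (fun j => Finsupp.single (Lst j) (1 : R))]
    refine Finset.sum_congr rfl fun j _ => ?_
    simp only [eL, Finsupp.lmapDomain_apply]
    exact Finsupp.mapDomain_single
  have hDL : DL R m (∑ j ∈ Finset.range i, Finsupp.single (Lst j) (1 : R))
      = Finsupp.single (altL m i) (1 : R) - Finsupp.single (altL' m i) 1 := by
    have step : ∀ j ∈ Finset.range i, DL R m (Finsupp.single (Lst j) (1 : R)) =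
        Finsupp.single (altL m (j + 1) ++ altL' m (i - (j + 1))) (1 : R) -
          Finsupp.single (altL m j ++ altL' m (i - j)) 1 := by
      intro j hj
      rw [Finset.mem_range] at hj
      rw [DL, Finsupp.lsum_single, LinearMap.toSpanSingleton_apply_one]
      have hL : Lst j = altL m j ++ (1 :: (m - 2) :: 1 :: altL' m (i - j - 1)) := by
        simp [hLst, List.append_assoc, altL_append_one]
      rw [hL, dList_L R m hm (i - j - 1) j, show i - j - 1 + 1 = i - j from by omega,
        show i - (j + 1) = i - j - 1 from by omega]
    rw [map_sum, Finset.sum_congr rfl step,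
      Finset.sum_range_sub (fun t => Finsupp.single (altL m t ++ altL' m (i - t)) (1 : R))]
    simp [altL, altL']
  have hr : ∀ (l : List ℕ) (h : l.length = 2 * i ∧ ((l.sum : ℤ)) = (m : ℤ) * i ∧
        ∀ x ∈ l, 1 ≤ x ∧ x < m),
      rL R ((m : ℤ) * i) m (2 * i) (Finsupp.single l (1 : R)) =
        Finsupp.single (⟨l, h⟩ : OPb ((m : ℤ) * i) m (2 * i)) 1 := by
    intro l h
    exact Finsupp.comapDomain_single Subtype.val (⟨l, h⟩ : OPb ((m : ℤ) * i) m (2 * i)) 1 _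
  refine ⟨∑ j ∈ (Finset.range i).attach, Finsupp.single (B j) (1 : R),
    ⟨altL m i, altL_length m i, by rw [altL_sum m i hm1]; push_cast; ring,
      fun x hx => by rcases altL_mem m i x hx with rfl | rfl <;> omega⟩,
    ⟨altL' m i, altL'_length m i, by rw [altL'_sum m i hm1]; push_cast; ring,
      fun x hx => by rcases altL'_mem m i x hx with rfl | rfl <;> omega⟩,
    rfl, rfl, by rw [heL], ?_⟩
  rw [dOP, LinearMap.comp_apply, LinearMap.comp_apply, heL, hDL, map_sub]
  congr 1
  · exact hr _ _
  · exact hr _ _
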